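/- Let d ≥ 1, θ_d = arccos(-1/d), and θ ∈ (0, θ_d). Suppose V = {v₁,...,v_n} ⊂ ℝ^{d+1} is the vertex set of a convex polytope with nonempty interior and ∠V ≤ θ. Then there exist unit vectors u₁,...,u_n such that conv(V) ⊆ ⋂ᵢ (vᵢ + C_{uᵢ,η}), where η = arcsin(sin(θ/2)/sin(θ_d/2)) and C_{u,η} = {x ∈ ℝ^{d+1} : u·x ≥ |u||x| cos η} is the cone of half-angle η around u. -/

import Mathlib

open scoped RealInnerProductSpace


variable {E : Type*} [NormedAddCommGroup E] [InnerProductSpace ℝ E] [FiniteDimensional ℝ E]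

/-- Smallest enclosing ball with center in the convex hull of contact points. -/
lemma exists_minball (P : Finset E) (hP : P.Nonempty) :
    ∃ (c : E) (r : ℝ), (∀ p ∈ P, dist p c ≤ r) ∧
      c ∈ convexHull ℝ {p : E | p ∈ P ∧ dist p c = r} := by
  classical
  set f : E → ℝ := fun c => P.sup' hP fun p => dist p c with hf
  have hfc : Continuous f := by
    rw [continuous_iff_continuousAt]
    intro x
    exact ContinuousAt.finset_sup'_apply (f := fun p c => dist p c) hP
      fun p _ => (continuous_const.dist continuous_id).continuousAt
  obtain ⟨p₀, hp₀⟩ := id hP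
  have hfnn : ∀ c, 0 ≤ f c := fun c => le_trans dist_nonneg (Finset.le_sup' (fun p => dist p c) hp₀)
  have hkey : ∃ c, ∀ c', f c ≤ f c' := by
    obtain ⟨c, hcmem, hcmin⟩ := (isCompact_closedBall p₀ (2 * f p₀ + 1)).exists_isMinOn
      ⟨p₀, Metric.mem_closedBall_self (by have := hfnn p₀; linarith)⟩ hfc.continuousOn
    refine ⟨c, fun c' => ?_⟩
    by_cases h : c' ∈ Metric.closedBall p₀ (2 * f p₀ + 1)
    · exact hcmin h
    · have h1 : f c ≤ f p₀ := hcmin (Metric.mem_closedBall_self (by have := hfnn p₀; linarith))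
      have h2 : dist p₀ c' ≤ f c' := Finset.le_sup' (fun p => dist p c') hp₀
      have h3 : 2 * f p₀ + 1 < dist p₀ c' := by
        rw [Metric.mem_closedBall, not_le, dist_comm] at h
        exact h
      have h4 : 0 ≤ f p₀ := hfnn p₀
      linarith
  obtain ⟨c, hcmin⟩ := hkey
  refine ⟨c, f c, fun p hp => Finset.le_sup' (fun p => dist p c) hp, ?_⟩
  by_contra hcnot
  set S : Set E := {p : E | p ∈ P ∧ dist p c = f c} with hS
  have hSsub : S ⊆ (P : Set E) := fun p hp => hp.1
  have hSfin : S.Finite := P.finite_toSet.subset hSsub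
  obtain ⟨g, u, hgu, hgS⟩ := geometric_hahn_banach_point_closed (convex_convexHull ℝ S)
    (hSfin.isClosed_convexHull ℝ) hcnot
  set w : E := (InnerProductSpace.toDual ℝ E).symm g with hw
  have hwapp : ∀ y, ⟪w, y⟫ = g y := fun y => InnerProductSpace.toDual_symm_apply
  set δ : ℝ := u - g c with hδ
  have hδ0 : 0 < δ := sub_pos.2 hgu
  have hSδ : ∀ p ∈ S, δ ≤ ⟪w, p - c⟫ := by
    intro p hp
    have := hgS p (subset_convexHull ℝ S hp)
    rw [hwapp, map_sub]
    simp only [hδ]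
    linarith
  -- S nonempty : the sup' is attained
  obtain ⟨q₀, hq₀P, hq₀⟩ := Finset.exists_mem_eq_sup' hP fun p => dist p c
  have hq₀S : q₀ ∈ S := ⟨hq₀P, hq₀.symm⟩
  have hw0 : w ≠ 0 := by
    intro h
    have := hSδ q₀ hq₀S
    rw [h] at this
    simp at this
    linarith
  have hB : 0 < ‖w‖ ^ 2 := pow_pos (norm_pos_iff.mpr hw0) 2
  set gfun : E → ℝ := fun p => if dist p c = f c then min 1 (δ / ‖w‖ ^ 2)
    else (f c ^ 2 - dist p c ^ 2) / (2 * |⟪w, p - c⟫| + ‖w‖ ^ 2 + 1) with hgfun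
  have hgpos : ∀ p ∈ P, 0 < gfun p := by
    intro p hp
    simp only [hgfun]
    split_ifs with h
    · exact lt_min one_pos (div_pos hδ0 hB)
    · apply div_pos
      · have h1 : dist p c ≤ f c := Finset.le_sup' (fun p => dist p c) hp
        have h2 : dist p c < f c := lt_of_le_of_ne h1 h
        have h3 : 0 ≤ dist p c := dist_nonneg
        nlinarith
      · positivity
  set t : ℝ := (P.inf' hP gfun) / 2 with ht
  have hm : 0 < P.inf' hP gfun := (Finset.lt_inf'_iff hP).2 hgpos
  have ht0 : 0 < t := by positivity
  have htlt : ∀ p ∈ P, t < gfun p := fun p hp =>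
    lt_of_lt_of_le (by linarith) (Finset.inf'_le gfun hp)
  have ht1 : t ≤ 1 := by
    have := htlt q₀ hq₀P
    simp only [hgfun] at this
    rw [if_pos hq₀S.2] at this
    have := lt_min_iff.1 this
    linarith [this.1]
  have hkey : ∀ p ∈ P, dist p (c + t • w) < f c := by
    intro p hp
    have hexp : dist p (c + t • w) ^ 2
        = dist p c ^ 2 - 2 * (t * ⟪w, p - c⟫) + t ^ 2 * ‖w‖ ^ 2 := by
      rw [dist_eq_norm, dist_eq_norm]
      have : p - (c + t • w) = (p - c) - t • w := by abel
      rw [this, @norm_sub_sq_real, real_inner_smul_right, real_inner_comm, norm_smul]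
      simp only [mul_pow, Real.norm_eq_abs, sq_abs]
    have hsq : dist p (c + t • w) ^ 2 < f c ^ 2 := by
      by_cases h : dist p c = f c
      · have hδp : δ ≤ ⟪w, p - c⟫ := hSδ p ⟨hp, h⟩
        have htp := htlt p hp
        simp only [hgfun, if_pos h] at htp
        have h2 : t < δ / ‖w‖ ^ 2 := lt_of_lt_of_le htp (min_le_right _ _)
        have h3 : t * ‖w‖ ^ 2 < δ := (lt_div_iff₀ hB).1 h2
        rw [hexp, h]
        nlinarith
      · have h1 : dist p c < f c :=
          lt_of_le_of_ne (Finset.le_sup' (fun p => dist p c) hp) h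
        have htp := htlt p hp
        simp only [hgfun, if_neg h] at htp
        have hden : 0 < 2 * |⟪w, p - c⟫| + ‖w‖ ^ 2 + 1 := by positivity
        have h2 : t * (2 * |⟪w, p - c⟫| + ‖w‖ ^ 2 + 1) < f c ^ 2 - dist p c ^ 2 :=
          (lt_div_iff₀ hden).1 htp
        have h3 : -⟪w, p - c⟫ ≤ |⟪w, p - c⟫| := neg_le_abs _
        have e1 : t ^ 2 * ‖w‖ ^ 2 ≤ t * ‖w‖ ^ 2 := by
          nlinarith [mul_le_mul_of_nonneg_right ht1 (mul_nonneg ht0.le hB.le)]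
        have e2 : -(2 * (t * ⟪w, p - c⟫)) ≤ 2 * (t * |⟪w, p - c⟫|) := by nlinarith
        have h2' : 2 * (t * |⟪w, p - c⟫|) + t * ‖w‖ ^ 2 + t < f c ^ 2 - dist p c ^ 2 := by
          nlinarith [h2]
        rw [hexp]
        linarith
    exact lt_of_pow_lt_pow_left₀ 2 (hfnn c) hsq
  have : f (c + t • w) < f c := (Finset.sup'_lt_iff hP).2 hkey
  exact absurd (hcmin (c + t • w)) (not_le.2 this)

/-- Jung-type spherical cap lemma: a finite set of unit vectors lying in an open
half-space, with pairwise distances at most `D`, lies in a suitable spherical cap. -/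
lemma cap_lemma {d : ℕ} (hdim : Module.finrank ℝ E = d + 1)
    (P : Finset E) (hP : P.Nonempty)
    (hunit : ∀ p ∈ P, ‖p‖ = 1)
    (w₀ : E) (hw₀ : ∀ p ∈ P, 0 < ⟪w₀, p⟫)
    (D : ℝ) (hD0 : 0 ≤ D) (hD : ∀ p ∈ P, ∀ q ∈ P, ‖p - q‖ ≤ D) :
    ∃ u : E, ‖u‖ = 1 ∧
      ∀ p ∈ P, Real.sqrt (1 - D ^ 2 * d / (2 * (d + 1))) ≤ ⟪u, p⟫ := by
  classical
  obtain ⟨c, r, hball, hconv⟩ := exists_minball P hP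
  set S : Set E := {p : E | p ∈ P ∧ dist p c = r} with hSdef
  obtain ⟨q₀, hq₀⟩ := id hP
  have hr0 : 0 ≤ r := le_trans dist_nonneg (hball q₀ hq₀)
  have hSsubP : S ⊆ (P : Set E) := fun p hp => hp.1
  -- all contact points lie on the hyperplane ⟪c, ·⟫ = β
  have hβ : ∀ s ∈ S, ⟪c, s⟫ = (1 + ‖c‖ ^ 2 - r ^ 2) / 2 := by
    intro s hs
    have h1 : ‖s - c‖ ^ 2 = r ^ 2 := by rw [← dist_eq_norm, hs.2]
    have h2 : ‖s‖ = 1 := hunit s hs.1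
    rw [@norm_sub_sq_real, h2] at h1
    have h3 : ⟪s, c⟫ = ⟪c, s⟫ := real_inner_comm _ _
    linarith
  have hlin : IsLinearMap ℝ (fun y : E => ⟪c, y⟫) :=
    ⟨fun x y => inner_add_right c x y, fun t x => real_inner_smul_right c x t⟩
  have hplane : convexHull ℝ S ⊆ {y : E | ⟪c, y⟫ = (1 + ‖c‖ ^ 2 - r ^ 2) / 2} :=
    convexHull_min hβ (convex_hyperplane hlin _)
  have hc2 : ‖c‖ ^ 2 = 1 - r ^ 2 := by
    have := hplane hconv
    rw [Set.mem_setOf_eq, real_inner_self_eq_norm_sq] at this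
    linarith
  -- c is in the open half-space, hence nonzero
  have hcw : 0 < ⟪w₀, c⟫ := by
    have hsub : convexHull ℝ S ⊆ {y : E | 0 < ⟪w₀, y⟫} := by
      refine subset_trans (convexHull_mono hSsubP) (convexHull_min ?_ ?_)
      · exact fun p hp => hw₀ p hp
      · exact convex_halfSpace_gt ⟨fun x y => inner_add_right w₀ x y,
          fun t x => real_inner_smul_right w₀ x t⟩ 0
    exact hsub hconv
  have hc0 : c ≠ 0 := by
    intro h
    rw [h, inner_zero_right] at hcw
    exact lt_irrefl 0 hcw
  -- Carathéodory
  obtain ⟨ι, hι, z, lam, hrange, haff, hlam, hlam1, hlamz⟩ :=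
    eq_pos_convex_span_of_mem_convexHull hconv
  letI := hι
  haveI : Nonempty ι := by
    by_contra h
    rw [not_nonempty_iff] at h
    rw [Finset.univ_eq_empty, Finset.sum_empty] at hlam1
    exact one_ne_zero hlam1.symm
  have hzS : ∀ i, z i ∈ S := fun i => hrange (Set.mem_range_self i)
  -- dimension count
  haveI : Fact (Module.finrank ℝ E = d + 1) := Fact.mk hdim
  have hW : Module.finrank ℝ ((ℝ ∙ c)ᗮ) = d := Submodule.finrank_orthogonal_span_singleton hc0
  have hspan : vectorSpan ℝ (Set.range z) ≤ (ℝ ∙ c)ᗮ := by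
    rw [vectorSpan_def]
    refine Submodule.span_le.2 ?_
    rintro x ⟨a, ha, b, hb, rfl⟩
    obtain ⟨i, rfl⟩ := ha
    obtain ⟨j, rfl⟩ := hb
    simp only [vsub_eq_sub]
    rw [SetLike.mem_coe, Submodule.mem_orthogonal_singleton_iff_inner_right,
      inner_sub_right, hβ _ (hzS i), hβ _ (hzS j), sub_self]
  have hcard : Fintype.card ι ≤ d + 1 := by
    have hc1 : Fintype.card ι = (Fintype.card ι - 1) + 1 :=
      (Nat.succ_pred_eq_of_pos Fintype.card_pos).symm
    have hfr : Module.finrank ℝ (vectorSpan ℝ (Set.range z)) = Fintype.card ι - 1 :=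
      haff.finrank_vectorSpan hc1
    have hle : Module.finrank ℝ (vectorSpan ℝ (Set.range z)) ≤ d := hW ▸ Submodule.finrank_mono hspan
    omega
  -- quadratic identity
  set g : ι → E := fun i => z i - c with hg
  have hgr : ∀ i, ‖g i‖ = r := by
    intro i
    rw [hg]
    have := (hzS i).2
    rwa [dist_eq_norm] at this
  have hg0 : ∑ i, lam i • g i = 0 := by
    have e : ∑ i, lam i • g i = (∑ i, lam i • z i) - (∑ i, lam i) • c := by
      rw [Finset.sum_smul, ← Finset.sum_sub_distrib]
      exact Finset.sum_congr rfl fun i _ => by rw [hg]; exact smul_sub _ _ _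
    rw [e, hlam1, hlamz, one_smul, sub_self]
  have hxx : ⟪(∑ i, lam i • g i), (∑ j, lam j • g j)⟫ = ∑ i, ∑ j, lam i * lam j * ⟪g i, g j⟫ := by
    rw [sum_inner]
    refine Finset.sum_congr rfl fun i _ => ?_
    rw [real_inner_smul_left, inner_sum, Finset.mul_sum]
    refine Finset.sum_congr rfl fun j _ => ?_
    rw [real_inner_smul_right]
    ring
  have hinner0 : ∑ i, ∑ j, lam i * lam j * ⟪g i, g j⟫ = 0 := by
    rw [← hxx, hg0, inner_zero_left]
  have hzz : ∀ i j, ‖z i - z j‖ ^ 2 = 2 * r ^ 2 - 2 * ⟪g i, g j⟫ := by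
    intro i j
    have he : z i - z j = g i - g j := by simp [hg]
    rw [he, @norm_sub_sq_real, hgr i, hgr j]
    ring
  have hAA : ∀ K : ℝ, ∑ i, ∑ j, K * (lam i * lam j) = K := by
    intro K
    have e : ∀ i : ι, ∑ j, K * (lam i * lam j) = K * lam i := by
      intro i
      calc ∑ j, K * (lam i * lam j) = ∑ j, (K * lam i) * lam j :=
            Finset.sum_congr rfl fun j _ => by ring
        _ = K * lam i := by rw [← Finset.mul_sum, hlam1, mul_one]
    rw [Finset.sum_congr rfl fun i _ => e i, ← Finset.mul_sum, hlam1, mul_one]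
  have hTsum : ∑ i, ∑ j, lam i * lam j * ‖z i - z j‖ ^ 2 = 2 * r ^ 2 := by
    calc ∑ i, ∑ j, lam i * lam j * ‖z i - z j‖ ^ 2
        = ∑ i, ∑ j, (2 * r ^ 2 * (lam i * lam j) - 2 * (lam i * lam j * ⟪g i, g j⟫)) :=
          Finset.sum_congr rfl fun i _ => Finset.sum_congr rfl fun j _ => by rw [hzz i j]; ring
      _ = (∑ i, ∑ j, 2 * r ^ 2 * (lam i * lam j))
          - ∑ i, ∑ j, 2 * (lam i * lam j * ⟪g i, g j⟫) := by
          simp only [Finset.sum_sub_distrib]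
      _ = 2 * r ^ 2 := by
          rw [hAA (2 * r ^ 2)]
          simp only [← Finset.mul_sum]
          rw [hinner0, mul_zero, sub_zero]
  have hTle : ∑ i, ∑ j, lam i * lam j * ‖z i - z j‖ ^ 2
      ≤ D ^ 2 * (1 - ∑ i, lam i ^ 2) := by
    have e2 : ∀ i ∈ Finset.univ, ∀ j ∈ Finset.univ, lam i * lam j * ‖z i - z j‖ ^ 2
        ≤ D ^ 2 * (lam i * lam j) - (if i = j then D ^ 2 * lam j ^ 2 else 0) := by
      intro i _ j _
      by_cases h : i = j
      · subst h
        simp [sub_self, pow_two]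
      · rw [if_neg h, sub_zero]
        have h1 : ‖z i - z j‖ ^ 2 ≤ D ^ 2 :=
          pow_le_pow_left₀ (norm_nonneg _) (hD _ (hzS i).1 _ (hzS j).1) 2
        have h2 : 0 ≤ lam i * lam j := le_of_lt (mul_pos (hlam i) (hlam j))
        calc lam i * lam j * ‖z i - z j‖ ^ 2 ≤ lam i * lam j * D ^ 2 :=
              mul_le_mul_of_nonneg_left h1 h2
          _ = D ^ 2 * (lam i * lam j) := by ring
    calc ∑ i, ∑ j, lam i * lam j * ‖z i - z j‖ ^ 2
        ≤ ∑ i, ∑ j, (D ^ 2 * (lam i * lam j) - (if i = j then D ^ 2 * lam j ^ 2 else 0)) :=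
          Finset.sum_le_sum fun i hi => Finset.sum_le_sum fun j hj => e2 i hi j hj
      _ = (∑ i, ∑ j, D ^ 2 * (lam i * lam j))
          - ∑ i : ι, ∑ j : ι, (if i = j then D ^ 2 * lam j ^ 2 else 0) := by
          simp only [Finset.sum_sub_distrib]
      _ = D ^ 2 * (1 - ∑ i, lam i ^ 2) := by
          rw [hAA (D ^ 2)]
          have hite : ∀ i : ι, ∑ j : ι, (if i = j then D ^ 2 * lam j ^ 2 else 0)
              = D ^ 2 * lam i ^ 2 := by
            intro i
            rw [Finset.sum_ite_eq]
            simp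
          rw [Finset.sum_congr rfl fun i _ => hite i, ← Finset.mul_sum]
          ring
  -- Cauchy–Schwarz on the weights
  have hcs : (1 : ℝ) ≤ (d + 1 : ℝ) * ∑ i, lam i ^ 2 := by
    have h1 : (∑ i, lam i) ^ 2 ≤ (Finset.univ.card : ℝ) * ∑ i, lam i ^ 2 :=
      sq_sum_le_card_mul_sum_sq
    rw [hlam1, one_pow, Finset.card_univ] at h1
    have h2 : (Fintype.card ι : ℝ) ≤ (d + 1 : ℝ) := by exact_mod_cast hcard
    have h3 : 0 ≤ ∑ i, lam i ^ 2 := Finset.sum_nonneg fun i _ => sq_nonneg _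
    nlinarith
  have hr2 : r ^ 2 ≤ D ^ 2 * d / (2 * (d + 1)) := by
    have h1 : 2 * r ^ 2 ≤ D ^ 2 * (1 - ∑ i, lam i ^ 2) := hTsum ▸ hTle
    have hd2 : (0 : ℝ) < (d : ℝ) + 1 := by positivity
    have h2 : (1 : ℝ) - ∑ i, lam i ^ 2 ≤ (d : ℝ) / (d + 1) := by
      have e : (d : ℝ) / (d + 1) = 1 - 1 / ((d : ℝ) + 1) := by field_simp; ring
      rw [e]
      have h6 : 1 / ((d : ℝ) + 1) ≤ ∑ i, lam i ^ 2 := by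
        rw [div_le_iff₀ hd2, mul_comm]
        exact hcs
      linarith
    have h3 : D ^ 2 * (1 - ∑ i, lam i ^ 2) ≤ D ^ 2 * ((d : ℝ) / (d + 1)) :=
      mul_le_mul_of_nonneg_left h2 (sq_nonneg D)
    rw [le_div_iff₀ (by positivity : (0:ℝ) < 2 * ((d:ℝ) + 1))]
    have e4 : D ^ 2 * ((d : ℝ) / (d + 1)) * ((d : ℝ) + 1) = D ^ 2 * (d : ℝ) := by
      field_simp
    have h5 := mul_le_mul_of_nonneg_right (h1.trans h3) hd2.le
    rw [e4] at h5
    nlinarith [h5]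
  -- conclude
  have hcn : 0 < ‖c‖ := norm_pos_iff.mpr hc0
  refine ⟨‖c‖⁻¹ • c, ?_, ?_⟩
  · rw [norm_smul, norm_inv, norm_norm, inv_mul_cancel₀ (ne_of_gt hcn)]
  · intro p hp
    have hip : ‖c‖ ^ 2 ≤ ⟪c, p⟫ := by
      have h1 : ‖p - c‖ ^ 2 ≤ r ^ 2 := by
        rw [← dist_eq_norm]
        exact pow_le_pow_left₀ dist_nonneg (hball p hp) 2
      rw [@norm_sub_sq_real, hunit p hp] at h1
      have h2 : ⟪p, c⟫ = ⟪c, p⟫ := real_inner_comm _ _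
      nlinarith [hc2]
    have h3 : ⟪‖c‖⁻¹ • c, p⟫ = ‖c‖⁻¹ * ⟪c, p⟫ := real_inner_smul_left _ _ _
    rw [h3]
    have h4 : ‖c‖ ≤ ‖c‖⁻¹ * ⟪c, p⟫ := by
      calc ‖c‖ = ‖c‖ ^ 2 / ‖c‖ := by field_simp [pow_two]
        _ ≤ ⟪c, p⟫ / ‖c‖ := by gcongr
        _ = ‖c‖⁻¹ * ⟪c, p⟫ := by ring
    refine le_trans ?_ h4
    have h5 : ‖c‖ = Real.sqrt (1 - r ^ 2) := by
      rw [← hc2, Real.sqrt_sq hcn.le]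
    rw [h5]
    exact Real.sqrt_le_sqrt (by linarith)

lemma cone_convex (u v : E) (κ : ℝ) (hκ0 : 0 ≤ κ) :
    Convex ℝ {x : E | ‖x - v‖ * κ ≤ ⟪u, x - v⟫} := by
  intro x hx y hy a b ha hb hab
  simp only [Set.mem_setOf_eq] at hx hy ⊢
  have hsub : a • x + b • y - v = a • (x - v) + b • (y - v) := by
    calc a • x + b • y - v = a • x + b • y - (a + b) • v := by rw [hab, one_smul]
      _ = a • (x - v) + b • (y - v) := by module
  rw [hsub, inner_add_right, real_inner_smul_right, real_inner_smul_right]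
  calc ‖a • (x - v) + b • (y - v)‖ * κ
      ≤ (a * ‖x - v‖ + b * ‖y - v‖) * κ := by
        refine mul_le_mul_of_nonneg_right ?_ hκ0
        refine le_trans (norm_add_le _ _) ?_
        rw [norm_smul, norm_smul, Real.norm_eq_abs, Real.norm_eq_abs,
          abs_of_nonneg ha, abs_of_nonneg hb]
    _ ≤ a * ⟪u, x - v⟫ + b * ⟪u, y - v⟫ := by
        rw [add_mul, mul_assoc, mul_assoc]
        exact add_le_add (mul_le_mul_of_nonneg_left hx ha)
          (mul_le_mul_of_nonneg_left hy hb)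


/-- If `V` is the vertex set of a convex polytope in `ℝ^{d+1}` with nonempty interior,
and every angle formed by points of `V` is at most `θ < θ_d = arccos(-1/d)`, then each
vertex `v` admits a unit vector `u` such that the whole polytope lies in the cone
`v + C_{u,η}` of half-angle `η = arcsin(sin(θ/2)/sin(θ_d/2))` with vertex `v`. -/
theorem polytope_subset_cones
    (d : ℕ) (hd : 1 ≤ d)
    (θ : ℝ) (hθ0 : 0 < θ) (hθ : θ < Real.arccos (-(1 / (d : ℝ))))
    (V : Finset (EuclideanSpace ℝ (Fin (d + 1))))
    (hint : (interior (convexHull ℝ (V : Set (EuclideanSpace ℝ (Fin (d + 1)))))).Nonempty)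
    (hvert : ∀ v ∈ V, v ∉ convexHull ℝ ((V : Set (EuclideanSpace ℝ (Fin (d + 1)))) \ {v}))
    (hang : ∀ x ∈ V, ∀ y ∈ V, ∀ z ∈ V, x ≠ y → z ≠ y →
      EuclideanGeometry.angle x y z ≤ θ) :
    ∀ v ∈ V, ∃ u : EuclideanSpace ℝ (Fin (d + 1)), ‖u‖ = 1 ∧
      ∀ x ∈ convexHull ℝ (V : Set (EuclideanSpace ℝ (Fin (d + 1)))),
        ‖x - v‖ * Real.cos (Real.arcsin
            (Real.sin (θ / 2) / Real.sin (Real.arccos (-(1 / (d : ℝ))) / 2)))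
          ≤ ⟪u, x - v⟫ := by
  classical
  intro v hv
  set θd : ℝ := Real.arccos (-(1 / (d : ℝ))) with hθd_def
  set κ : ℝ := Real.cos (Real.arcsin (Real.sin (θ / 2) / Real.sin (θd / 2))) with hκ_def
  have hκ0 : 0 ≤ κ := Real.cos_arcsin_nonneg _
  -- basic facts about d and θd
  have hd1 : (1 : ℝ) ≤ (d : ℝ) := by exact_mod_cast hd
  have hd0 : (0 : ℝ) < (d : ℝ) := by linarith
  have hθd_le_pi : θd ≤ Real.pi := Real.arccos_le_pi _
  have hθd_nonneg : 0 ≤ θd := Real.arccos_nonneg _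
  have hθd_pos : 0 < θd := Real.arccos_pos.2 (by linarith [one_div_pos.mpr hd0])
  have hθπ : θ < Real.pi := lt_of_lt_of_le hθ hθd_le_pi
  have hcosθd : Real.cos θd = -(1 / (d : ℝ)) := by
    rw [hθd_def]
    refine Real.cos_arccos ?_ ?_
    · have : 1 / (d : ℝ) ≤ 1 := by
        rw [div_le_one hd0]; exact hd1
      linarith
    · have : 0 < 1 / (d : ℝ) := by positivity
      linarith
  have hsinθd2 : Real.sin (θd / 2) ^ 2 = ((d : ℝ) + 1) / (2 * d) := by
    rw [Real.sin_half_eq_sqrt hθd_nonneg (by linarith [Real.pi_pos]),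
      Real.sq_sqrt (by nlinarith [Real.neg_one_le_cos θd, Real.cos_le_one θd])]
    rw [hcosθd]
    rw [div_eq_div_iff (by norm_num) (by positivity)]
    field_simp
    ring
  have hsinθd2_pos : 0 < Real.sin (θd / 2) := by
    apply Real.sin_pos_of_pos_of_lt_pi
    · linarith
    · linarith [Real.pi_pos]
  have hsinθ2_pos : 0 < Real.sin (θ / 2) := by
    apply Real.sin_pos_of_pos_of_lt_pi <;> linarith [Real.pi_pos]
  set D : ℝ := 2 * Real.sin (θ / 2) with hD_def
  have hD0 : 0 ≤ D := by positivity
  have hD2 : D ^ 2 = 2 - 2 * Real.cos θ := by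
    rw [hD_def, mul_pow, Real.sin_half_eq_sqrt (by linarith) (by linarith [Real.pi_pos]),
      Real.sq_sqrt (by nlinarith [Real.cos_le_one θ])]
    ring
  -- κ equals the cap bound
  have hκeq : κ = Real.sqrt (1 - D ^ 2 * d / (2 * (d + 1))) := by
    rw [hκ_def, Real.cos_arcsin]
    congr 1
    rw [div_pow, hsinθd2]
    have hsin2 : Real.sin (θ / 2) ^ 2 = (1 - Real.cos θ) / 2 := by
      rw [Real.sin_half_eq_sqrt (by linarith) (by linarith [Real.pi_pos]),
        Real.sq_sqrt (by nlinarith [Real.cos_le_one θ])]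
    rw [hsin2, hD2]
    field_simp
  -- there is a second vertex
  obtain ⟨x₀, hx₀V, hx₀v⟩ : ∃ x ∈ V, x ≠ v := by
    by_contra h
    push_neg at h
    have hsub : (V : Set (EuclideanSpace ℝ (Fin (d + 1)))) ⊆ {v} := fun x hx => h x hx
    have h1 : convexHull ℝ (V : Set (EuclideanSpace ℝ (Fin (d + 1)))) ⊆ {v} := by
      have h2 := convexHull_mono (𝕜 := ℝ) hsub
      rwa [convexHull_singleton] at h2
    obtain ⟨y, hy⟩ := hint
    have h3 := interior_mono h1 hy
    rw [interior_singleton] at h3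
    exact h3
  -- separating functional at the vertex v
  have hQfin : ((V : Set (EuclideanSpace ℝ (Fin (d + 1)))) \ {v}).Finite := V.finite_toSet.diff
  obtain ⟨f, u₀, hfQ, hfv⟩ := geometric_hahn_banach_closed_point
    (convex_convexHull ℝ _) (hQfin.isClosed_convexHull ℝ) (hvert v hv)
  set ω : (EuclideanSpace ℝ (Fin (d + 1))) := -((InnerProductSpace.toDual ℝ (EuclideanSpace ℝ (Fin (d + 1)))).symm f) with hω_def
  have hωip : ∀ y : (EuclideanSpace ℝ (Fin (d + 1))), ⟪ω, y⟫ = -(f y) := by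
    intro y
    rw [hω_def, inner_neg_left, InnerProductSpace.toDual_symm_apply]
  have hωpos : ∀ x ∈ V, x ≠ v → 0 < ⟪ω, x - v⟫ := by
    intro x hx hxv
    have h1 : f x < u₀ := hfQ x (subset_convexHull ℝ _ ⟨hx, hxv⟩)
    have h2 : ⟪ω, x - v⟫ = f v - f x := by rw [hωip, map_sub]; ring
    rw [h2]
    linarith
  -- the set of unit directions from v
  set P : Finset (EuclideanSpace ℝ (Fin (d + 1))) := (V.erase v).image (fun x => ‖x - v‖⁻¹ • (x - v)) with hP_def
  have hP : P.Nonempty := ⟨_, Finset.mem_image_of_mem _ (Finset.mem_erase.2 ⟨hx₀v, hx₀V⟩)⟩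
  have hmemP : ∀ p ∈ P, ∃ x ∈ V, x ≠ v ∧ p = ‖x - v‖⁻¹ • (x - v) := by
    intro p hp
    obtain ⟨x, hx, rfl⟩ := Finset.mem_image.1 hp
    exact ⟨x, (Finset.mem_erase.1 hx).2, (Finset.mem_erase.1 hx).1, rfl⟩
  have hnv : ∀ x : (EuclideanSpace ℝ (Fin (d + 1))), x ≠ v → ‖x - v‖ ≠ 0 := fun x hxv =>
    norm_ne_zero_iff.2 (sub_ne_zero.2 hxv)
  have hunit : ∀ p ∈ P, ‖p‖ = 1 := by
    intro p hp
    obtain ⟨x, hx, hxv, rfl⟩ := hmemP p hp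
    rw [norm_smul, norm_inv, norm_norm, inv_mul_cancel₀ (hnv x hxv)]
  have hhemi : ∀ p ∈ P, 0 < ⟪ω, p⟫ := by
    intro p hp
    obtain ⟨x, hx, hxv, rfl⟩ := hmemP p hp
    rw [real_inner_smul_right]
    exact mul_pos (inv_pos.2 ((hnv x hxv).lt_of_le' (norm_nonneg _))) (hωpos x hx hxv)
  -- diameter bound
  have hdiam : ∀ p ∈ P, ∀ q ∈ P, ‖p - q‖ ≤ D := by
    intro p hp q hq
    obtain ⟨x, hx, hxv, rfl⟩ := hmemP p hp
    obtain ⟨z, hz, hzv, rfl⟩ := hmemP q hq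
    have hx0 : (0:ℝ) < ‖x - v‖ := (hnv x hxv).lt_of_le' (norm_nonneg _)
    have hz0 : (0:ℝ) < ‖z - v‖ := (hnv z hzv).lt_of_le' (norm_nonneg _)
    have hip : ⟪‖x - v‖⁻¹ • (x - v), ‖z - v‖⁻¹ • (z - v)⟫
        = Real.cos (InnerProductGeometry.angle (x - v) (z - v)) := by
      rw [InnerProductGeometry.cos_angle, real_inner_smul_left, real_inner_smul_right]
      field_simp
    have hangle : InnerProductGeometry.angle (x - v) (z - v) ≤ θ := by
      have := hang x hx v hv z hz hxv hzv
      rwa [EuclideanGeometry.angle, vsub_eq_sub, vsub_eq_sub] at this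
    have hcos : Real.cos θ ≤ ⟪‖x - v‖⁻¹ • (x - v), ‖z - v‖⁻¹ • (z - v)⟫ := by
      rw [hip]
      exact Real.cos_le_cos_of_nonneg_of_le_pi (InnerProductGeometry.angle_nonneg _ _)
        (by linarith) hangle
    have hnorm2 : ‖‖x - v‖⁻¹ • (x - v) - ‖z - v‖⁻¹ • (z - v)‖ ^ 2 ≤ D ^ 2 := by
      rw [@norm_sub_sq_real, hunit _ hp, hunit _ hq, hD2]
      simp only [one_pow]
      linarith
    calc ‖‖x - v‖⁻¹ • (x - v) - ‖z - v‖⁻¹ • (z - v)‖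
        = Real.sqrt (‖‖x - v‖⁻¹ • (x - v) - ‖z - v‖⁻¹ • (z - v)‖ ^ 2) :=
          (Real.sqrt_sq (norm_nonneg _)).symm
      _ ≤ Real.sqrt (D ^ 2) := Real.sqrt_le_sqrt hnorm2
      _ = D := Real.sqrt_sq hD0
  -- apply the cap lemma
  obtain ⟨u, hu1, hucap⟩ := cap_lemma (E := (EuclideanSpace ℝ (Fin (d + 1)))) finrank_euclideanSpace_fin P hP hunit ω hhemi
    D hD0 hdiam
  refine ⟨u, hu1, ?_⟩
  -- the cone is convex and contains all vertices
  have hVK : ∀ x ∈ V, ‖x - v‖ * κ ≤ ⟪u, x - v⟫ := by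
    intro x hx
    by_cases hxv : x = v
    · subst hxv
      simp
    · have hpP : ‖x - v‖⁻¹ • (x - v) ∈ P :=
        Finset.mem_image_of_mem _ (Finset.mem_erase.2 ⟨hxv, hx⟩)
      have h1 : κ ≤ ⟪u, ‖x - v‖⁻¹ • (x - v)⟫ := by
        rw [hκeq]
        exact hucap _ hpP
      have hx0 : (0:ℝ) < ‖x - v‖ := (hnv x hxv).lt_of_le' (norm_nonneg _)
      have h2 : ⟪u, x - v⟫ = ‖x - v‖ * ⟪u, ‖x - v‖⁻¹ • (x - v)⟫ := by
        rw [real_inner_smul_right]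
        field_simp
      rw [h2]
      exact mul_le_mul_of_nonneg_left h1 hx0.le
  have hK := cone_convex u v κ hκ0
  intro x hx
  exact convexHull_min hVK hK hx
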